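/- The implicit component of SSP-LDIRK3(3,3,2) is L-stable: with A = [[γ,0,0],[1−2γ,γ,0],[1/2−γ,0,γ]], γ = 1 − √2/2, and b = (1/6, 1/6, 2/3), for every z ∈ ℂ with Re z ≤ 0 the matrix I − zA is invertible and the stability function R(z) = 1 + z·bᵀ(I − zA)⁻¹𝟙 satisfies |R(z)| ≤ 1; moreover bᵀA⁻¹𝟙 = 1, so that R(z) → 0 as |z| → ∞. -/

import Mathlib

open Matrix Filter

lemma aux_inv (g z : ℂ) (hd : 1 - g*z ≠ 0) :
    (1 - z • (!![g,0,0;1-2*g,g,0;1/2-g,0,g] : Matrix (Fin 3) (Fin 3) ℂ)) *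
    !![(1-g*z)⁻¹,0,0; z*(1-2*g)/(1-g*z)^2, (1-g*z)⁻¹, 0; z*(1/2-g)/(1-g*z)^2, 0, (1-g*z)⁻¹] = 1 := by
  have hd' : 1 - z*g ≠ 0 := by rwa [mul_comm] at hd
  ext i j
  fin_cases i <;> fin_cases j <;>
    simp [Matrix.mul_apply, Fin.sum_univ_three, Matrix.one_apply] <;>
    field_simp <;> ring

lemma aux_R (g z : ℂ) (hd : 1 - g*z ≠ 0) :
    1 + z * ((![(1:ℂ)/6,1/6,2/3]) ⬝ᵥ
      ((1 - z • (!![g,0,0;1-2*g,g,0;1/2-g,0,g] : Matrix (Fin 3) (Fin 3) ℂ))⁻¹ *ᵥ 1)) =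
    (1 + (1-2*g)*z + (g^2 - 2*g + 1/2)*z^2) / (1-g*z)^2 := by
  have hd' : 1 - z*g ≠ 0 := by rwa [mul_comm] at hd
  have step : 1 + z * ((![(1:ℂ)/6,1/6,2/3]) ⬝ᵥ
      ((1 - z • (!![g,0,0;1-2*g,g,0;1/2-g,0,g] : Matrix (Fin 3) (Fin 3) ℂ))⁻¹ *ᵥ 1)) =
      1 + z*(1-g*z)⁻¹ + z^2*((1-2*g)/2)*((1-g*z)^2)⁻¹ := by
    rw [Matrix.inv_eq_right_inv (aux_inv g z hd)]
    simp only [Matrix.mulVec, dotProduct, Fin.sum_univ_three, Matrix.cons_val',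
      Matrix.cons_val_zero, Matrix.cons_val_one, Matrix.head_cons, Matrix.empty_val',
      Matrix.cons_val_fin_one, Matrix.head_fin_const, Matrix.of_apply, Matrix.cons_val_two,
      Matrix.tail_cons, Pi.one_apply, mul_one]
    ring
  rw [step]
  field_simp
  ring

lemma aux_invR (g : ℝ) (hg : g ≠ 0) :
    (!![g,0,0;1-2*g,g,0;1/2-g,0,g] : Matrix (Fin 3) (Fin 3) ℝ) *
    !![g⁻¹,0,0; -(1-2*g)/g^2, g⁻¹, 0; -(1/2-g)/g^2, 0, g⁻¹] = 1 := by
  ext i j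
  fin_cases i <;> fin_cases j <;>
    simp [Matrix.mul_apply, Fin.sum_univ_three, Matrix.one_apply] <;>
    field_simp <;> ring

lemma aux_ineq (x y : ℝ) (hx : x ≤ 0) :
    (1 + (Real.sqrt 2 - 1)*x)^2 + (Real.sqrt 2 - 1)^2*y^2
      ≤ ((1 - (1-Real.sqrt 2/2)*x)^2 + (1-Real.sqrt 2/2)^2*y^2)^2 := by
  have hs : Real.sqrt 2 ^ 2 = 2 := Real.sq_sqrt (by norm_num)
  have h1 : 1 ≤ Real.sqrt 2 := by nlinarith [Real.sqrt_nonneg 2]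
  have h2 : Real.sqrt 2 ≤ 3/2 := by nlinarith [Real.sqrt_nonneg 2]
  set s := Real.sqrt 2
  set g : ℝ := 1 - s/2 with hg
  set a : ℝ := s - 1 with ha
  have hgpos : 0 < g := by rw [hg]; linarith
  have hapos : 0 ≤ a := by rw [ha]; linarith
  have hu : 0 ≤ -x := by linarith
  have p1 : 0 ≤ (-x) * g := mul_nonneg hu hgpos.le
  have p2 : 0 ≤ (-x) * a := mul_nonneg hu hapos
  have p3 : 0 ≤ (-x) * (2*g - a) := mul_nonneg hu (by rw [hg, ha]; nlinarith)
  have t1 : (1 - g*x)^4 - (1 + a*x)^2 ≥ 0 := by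
    have f1 : (1 - g*x)^2 - (1 + a*x) ≥ 0 := by nlinarith [sq_nonneg (g*x)]
    have f2 : (1 - g*x)^2 + (1 + a*x) ≥ 0 := by nlinarith [sq_nonneg (g*x)]
    nlinarith [mul_nonneg f1 f2]
  have t2 : 2*g^2*y^2*((1 - g*x)^2 - 1) ≥ 0 := by
    have : (1-g*x)^2 - 1 ≥ 0 := by nlinarith [sq_nonneg (g*x)]
    positivity
  have t3 : g^4*y^4 ≥ 0 := by positivity
  have hgasq : a^2 = 2*g^2 := by rw [ha, hg]; nlinarith
  nlinarith [t1, t2, t3]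

theorem stmt_10 :
    let g : ℝ := 1 - Real.sqrt 2 / 2
    let A : Matrix (Fin 3) (Fin 3) ℝ := !![g, 0, 0; 1 - 2*g, g, 0; 1/2 - g, 0, g]
    let b : Fin 3 → ℝ := ![1/6, 1/6, 2/3]
    let AC : Matrix (Fin 3) (Fin 3) ℂ := A.map Complex.ofReal
    let bC : Fin 3 → ℂ := fun i => (b i : ℂ)
    let R : ℂ → ℂ := fun z => 1 + z * (bC ⬝ᵥ ((1 - z • AC)⁻¹ *ᵥ 1))
    (∀ z : ℂ, z.re ≤ 0 → IsUnit (1 - z • AC) ∧ ‖R z‖ ≤ 1) ∧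
      b ⬝ᵥ (A⁻¹ *ᵥ 1) = 1 ∧
      Filter.Tendsto R (Filter.comap (fun z : ℂ => ‖z‖) Filter.atTop) (nhds 0) := by
  intro g A b AC bC R
  have hs : Real.sqrt 2 ^ 2 = 2 := Real.sq_sqrt (by norm_num)
  have h1 : 1 ≤ Real.sqrt 2 := by nlinarith [Real.sqrt_nonneg 2]
  have h2 : Real.sqrt 2 ≤ 3/2 := by nlinarith [Real.sqrt_nonneg 2]
  have hgdef : g = 1 - Real.sqrt 2 / 2 := rfl
  have hg0 : 0 < g := by rw [hgdef]; linarith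
  -- complex versions
  have hACeq : AC = !![((g:ℝ):ℂ),0,0; 1-2*((g:ℝ):ℂ),((g:ℝ):ℂ),0; 1/2-((g:ℝ):ℂ),0,((g:ℝ):ℂ)] := by
    ext i j
    fin_cases i <;> fin_cases j <;> simp [AC, A] <;> push_cast <;> ring
  have hbCeq : bC = ![(1:ℂ)/6,1/6,2/3] := by
    funext i
    fin_cases i <;> simp [bC, b] <;> norm_num
  have c1 : (1:ℂ) - 2*((g:ℝ):ℂ) = ((Real.sqrt 2:ℝ):ℂ) - 1 := by
    rw [hgdef]; push_cast; ring
  have c2 : ((g:ℝ):ℂ)^2 - 2*((g:ℝ):ℂ) + 1/2 = 0 := by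
    have : (g:ℝ)^2 - 2*g + 1/2 = 0 := by rw [hgdef]; nlinarith
    calc ((g:ℝ):ℂ)^2 - 2*((g:ℝ):ℂ) + 1/2 = (((g:ℝ)^2 - 2*g + 1/2 : ℝ) : ℂ) := by push_cast; ring
      _ = 0 := by rw [this]; norm_num
  clear_value g
  -- nonvanishing of denominator
  have hdz : ∀ z : ℂ, z.re ≤ 0 → 1 - ((g:ℝ):ℂ)*z ≠ 0 := by
    intro z hz h
    have := congrArg Complex.re h
    simp [Complex.sub_re, Complex.mul_re, Complex.ofReal_re, Complex.ofReal_im] at this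
    nlinarith [mul_nonpos_of_nonneg_of_nonpos hg0.le hz]
  -- formula for R
  have hR : ∀ z : ℂ, 1 - ((g:ℝ):ℂ)*z ≠ 0 →
      R z = (1 + (((Real.sqrt 2:ℝ):ℂ) - 1)*z) / (1 - ((g:ℝ):ℂ)*z)^2 := by
    intro z hd
    show 1 + z * (bC ⬝ᵥ ((1 - z • AC)⁻¹ *ᵥ 1)) = _
    rw [hACeq, hbCeq, aux_R _ z hd, c1, c2]
    ring
  refine ⟨?_, ?_, ?_⟩
  · intro z hz
    have hd := hdz z hz
    constructor
    · rw [hACeq]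
      exact ⟨⟨_, _, aux_inv _ z hd, mul_eq_one_comm.mp (aux_inv _ z hd)⟩, rfl⟩
    · rw [hR z hd, norm_div, norm_pow]
      set num : ℂ := 1 + (((Real.sqrt 2:ℝ):ℂ) - 1)*z with hnum
      set den : ℂ := 1 - ((g:ℝ):ℂ)*z with hden
      have e1 : (‖num‖)^2 = (1 + (Real.sqrt 2 - 1)*z.re)^2 + (Real.sqrt 2 - 1)^2*z.im^2 := by
        rw [Complex.sq_norm, Complex.normSq_apply, hnum]
        simp [Complex.add_re, Complex.add_im, Complex.mul_re, Complex.mul_im,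
          Complex.sub_re, Complex.sub_im, Complex.ofReal_re, Complex.ofReal_im]
        ring
      have e2 : (‖den‖)^2 = (1 - g*z.re)^2 + g^2*z.im^2 := by
        rw [Complex.sq_norm, Complex.normSq_apply, hden]
        simp [Complex.sub_re, Complex.sub_im, Complex.mul_re, Complex.mul_im,
          Complex.ofReal_re, Complex.ofReal_im]
        ring
      have hineq : (‖num‖)^2 ≤ ((‖den‖)^2)^2 := by
        rw [e1, e2]
        have := aux_ineq z.re z.im hz
        rw [← hgdef] at this
        exact this
      have hden0 : ‖den‖ ≠ 0 := by
        simpa using hd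
      have hdenpos : 0 < (‖den‖)^2 :=
        pow_pos ((norm_nonneg den).lt_of_ne (Ne.symm hden0)) 2
      rw [div_le_one hdenpos]
      nlinarith [norm_nonneg num, hdenpos]
  · -- real part
    have hg : (g:ℝ) ≠ 0 := hg0.ne'
    show b ⬝ᵥ (A⁻¹ *ᵥ 1) = 1
    rw [show A = !![g,0,0;1-2*g,g,0;1/2-g,0,g] from rfl,
      Matrix.inv_eq_right_inv (aux_invR g hg)]
    simp only [b, Matrix.mulVec, dotProduct, Fin.sum_univ_three, Matrix.cons_val',
      Matrix.cons_val_zero, Matrix.cons_val_one, Matrix.head_cons, Matrix.empty_val',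
      Matrix.cons_val_fin_one, Matrix.head_fin_const, Matrix.of_apply, Matrix.cons_val_two,
      Matrix.tail_cons, Pi.one_apply, mul_one]
    have hs3 : Real.sqrt 2^3 = 2*Real.sqrt 2 := by linear_combination (Real.sqrt 2)*hs
    have hs4 : Real.sqrt 2^4 = 4 := by linear_combination (Real.sqrt 2^2+2)*hs
    have hs5 : Real.sqrt 2^5 = 4*Real.sqrt 2 := by linear_combination (Real.sqrt 2^3+2*Real.sqrt 2)*hs
    have hs6 : Real.sqrt 2^6 = 8 := by linear_combination (Real.sqrt 2^4+2*Real.sqrt 2^2+4)*hs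
    have hs7 : Real.sqrt 2^7 = 8*Real.sqrt 2 := by linear_combination (Real.sqrt 2^5+2*Real.sqrt 2^3+4*Real.sqrt 2)*hs
    have hs8 : Real.sqrt 2^8 = 16 := by linear_combination (Real.sqrt 2^6+2*Real.sqrt 2^4+4*Real.sqrt 2^2+8)*hs
    field_simp
    rw [hgdef]
    ring_nf
    linarith [hs, hs3, hs4, hs5, hs6, hs7, hs8]
  · -- tendsto
    have key : ∀ z : ℂ, 8 ≤ ‖z‖ → ‖R z‖ ≤ (8/g^2) / ‖z‖ := by
      intro z hz8
      have ht0 : (0:ℝ) < ‖z‖ := by linarith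
      have hgz : ‖(((g:ℝ):ℂ)*z)‖ = g * ‖z‖ := by
        rw [norm_mul, Complex.norm_real, Real.norm_eq_abs, abs_of_pos hg0]
      have hglb : 2 ≤ g * ‖z‖ := by
        have : 8 * g ≤ ‖z‖ * g := by nlinarith
        rw [hgdef] at *
        nlinarith
      have hdlb : g * ‖z‖ / 2 ≤ ‖(1 - ((g:ℝ):ℂ)*z)‖ := by
        have htri : ‖(((g:ℝ):ℂ)*z)‖ - ‖(1:ℂ)‖ ≤ ‖(((g:ℝ):ℂ)*z - 1)‖ :=
          norm_sub_norm_le _ _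
        rw [norm_sub_rev, hgz, norm_one] at htri
        set t := ‖z‖
        set X := ‖(1 - ((g:ℝ):ℂ)*z)‖ with hX
        nlinarith [htri, hglb]
      have hd : 1 - ((g:ℝ):ℂ)*z ≠ 0 := by
        intro h
        rw [h, norm_zero] at hdlb
        nlinarith
      rw [hR z hd, norm_div, norm_pow]
      have hnub : ‖(1 + (((Real.sqrt 2:ℝ):ℂ) - 1)*z)‖ ≤ 2 * ‖z‖ := by
        calc ‖(1 + (((Real.sqrt 2:ℝ):ℂ) - 1)*z)‖
            ≤ ‖(1:ℂ)‖ + ‖((((Real.sqrt 2:ℝ):ℂ) - 1)*z)‖ := norm_add_le _ _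
          _ = 1 + ‖(((Real.sqrt 2:ℝ):ℂ) - 1)‖ * ‖z‖ := by rw [norm_one, norm_mul]
          _ ≤ 1 + 1 * ‖z‖ := by
              have : ‖(((Real.sqrt 2:ℝ):ℂ) - 1)‖ = Real.sqrt 2 - 1 := by
                rw [show (((Real.sqrt 2:ℝ):ℂ) - 1) = ((Real.sqrt 2 - 1 : ℝ):ℂ) by push_cast; ring,
                  Complex.norm_real, Real.norm_eq_abs, abs_of_nonneg (by linarith)]
              rw [this]
              nlinarith
          _ ≤ 2 * ‖z‖ := by linarith
      have hgt : (0:ℝ) < g * ‖z‖ / 2 := by nlinarith [mul_pos hg0 ht0]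
      have hdpow : (g * ‖z‖ / 2)^2 ≤ (‖(1 - ((g:ℝ):ℂ)*z)‖)^2 := by
        apply pow_le_pow_left₀ hgt.le hdlb
      have hdp0 : (0:ℝ) < (g * ‖z‖ / 2)^2 := pow_pos hgt 2
      calc ‖(1 + (((Real.sqrt 2:ℝ):ℂ) - 1)*z)‖ / (‖(1 - ((g:ℝ):ℂ)*z)‖)^2
          ≤ (2 * ‖z‖) / ((g * ‖z‖ / 2)^2) := by
            apply div_le_div₀ (by linarith [norm_nonneg z]) hnub hdp0 hdpow
        _ = (8/g^2) / ‖z‖ := by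
            field_simp
            ring
    have htc : Tendsto (fun z : ℂ => ‖z‖) (comap (fun z : ℂ => ‖z‖) atTop) atTop := tendsto_comap
    have tends : Tendsto (fun z : ℂ => (8/g^2) / ‖z‖) (comap (fun z : ℂ => ‖z‖) atTop) (nhds 0) := by
      have h0 : Tendsto (fun z : ℂ => (‖z‖)⁻¹) (comap (fun z : ℂ => ‖z‖) atTop) (nhds 0) :=
        tendsto_inv_atTop_zero.comp htc
      have := h0.const_mul (8/g^2)
      simpa [div_eq_mul_inv] using this
    exact squeeze_zero_norm' ((htc.eventually_ge_atTop 8).mono key) tends
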